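/- Let W₃ = ⟨r, s, t | r² = s² = t² = 1⟩ and let E be the kernel of the homomorphism W₃ → ℤ/2ℤ sending each of r, s, t to 1. Then E is a characteristic subgroup of W₃: every automorphism of W₃ maps E onto E. -/

import Mathlib

/-- Relators for the universal Coxeter group `W₃ = ⟨r, s, t | r² = s² = t² = 1⟩`,
with generators indexed `0 ↦ r`, `1 ↦ s`, `2 ↦ t`. -/
def cox3Rels : Set (FreeGroup (Fin 3)) := { w | ∃ i : Fin 3, w = FreeGroup.of i ^ 2 }

/-- The universal Coxeter group of rank 3. -/
abbrev W3 := PresentedGroup cox3Rels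

namespace W3

def r : W3 := PresentedGroup.of 0
def s : W3 := PresentedGroup.of 1
def t : W3 := PresentedGroup.of 2

/-- The parity homomorphism `W₃ → ℤ/2ℤ` sending each of `r`, `s`, `t` to `1`. -/
def parity : W3 →* Multiplicative (ZMod 2) :=
  PresentedGroup.toGroup (f := fun _ => Multiplicative.ofAdd 1)
    (by rintro w ⟨i, rfl⟩; simp [map_pow]; decide)

/-- The subgroup of even-length elements of `W₃`. -/
def E : Subgroup W3 := parity.ker

end W3

open W3

namespace W3Aux

lemma of_sq (i : Fin 3) : (PresentedGroup.of i : W3) * PresentedGroup.of i = 1 := by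
  have : (PresentedGroup.mk cox3Rels (FreeGroup.of i ^ 2)) = 1 := by
    apply (QuotientGroup.eq_one_iff _).2
    exact Subgroup.subset_normalClosure ⟨i, rfl⟩
  simpa [sq, map_mul, PresentedGroup.of] using this

/-- Reduced words over `Fin 3`. -/
abbrev S := {l : List (Fin 3) // l.Chain' (· ≠ ·)}

def fAct (i : Fin 3) : List (Fin 3) → List (Fin 3)
  | [] => [i]
  | a :: t => if a = i then t else i :: a :: t

lemma fAct_chain {i : Fin 3} {l : List (Fin 3)} (hl : l.Chain' (· ≠ ·)) :
    (fAct i l).Chain' (· ≠ ·) := by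
  cases l with
  | nil => simp [fAct, List.Chain']
  | cons a t =>
    by_cases h : a = i
    · simpa [fAct, h, List.Chain'] using hl.tail
    · simp only [fAct, if_neg h]
      exact List.isChain_cons_cons.2 ⟨Ne.symm h, hl⟩

lemma fAct_fAct {i : Fin 3} {l : List (Fin 3)} (hl : l.Chain' (· ≠ ·)) :
    fAct i (fAct i l) = l := by
  cases l with
  | nil => simp [fAct]
  | cons a t =>
    by_cases h : a = i
    · subst h
      cases t with
      | nil => simp [fAct]
      | cons b u =>
        have hb : b ≠ a := (List.isChain_cons_cons.1 hl).1.symm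
        simp [fAct, hb]
    · simp [fAct, h]

def perm (i : Fin 3) : Equiv.Perm S where
  toFun l := ⟨fAct i l.1, fAct_chain l.2⟩
  invFun l := ⟨fAct i l.1, fAct_chain l.2⟩
  left_inv l := Subtype.ext (fAct_fAct l.2)
  right_inv l := Subtype.ext (fAct_fAct l.2)

def ρ : W3 →* Equiv.Perm S :=
  PresentedGroup.toGroup (f := perm)
    (by
      rintro w ⟨i, rfl⟩
      simp only [sq, map_mul, FreeGroup.lift_apply_of]
      refine Equiv.ext fun l => Subtype.ext ?_
      exact fAct_fAct l.2)

@[simp] lemma ρ_of (i : Fin 3) : ρ (PresentedGroup.of i) = perm i :=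
  PresentedGroup.toGroup.of _

def prodW (l : List (Fin 3)) : W3 := (l.map (fun i => (PresentedGroup.of i : W3))).prod

@[simp] lemma prodW_nil : prodW [] = 1 := rfl

@[simp] lemma prodW_cons (a : Fin 3) (l : List (Fin 3)) :
    prodW (a :: l) = PresentedGroup.of a * prodW l := by simp [prodW]

@[simp] lemma prodW_append (l m : List (Fin 3)) :
    prodW (l ++ m) = prodW l * prodW m := by simp [prodW]

def e : S := ⟨[], List.isChain_nil⟩

lemma noCancel : ∀ (l : List (Fin 3)), l.Chain' (· ≠ ·) → ∀ (m : S),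
    (∀ c, l.getLast? = some c → m.1.head? ≠ some c) → (ρ (prodW l) m).1 = l ++ m.1 := by
  intro l
  induction l with
  | nil => intro _ m _; simp
  | cons a t ih =>
    intro hl m hcond
    have ht : (ρ (prodW t) m).1 = t ++ m.1 := by
      refine ih (List.isChain_cons.1 hl).2 m ?_
      intro c hc
      refine hcond c ?_
      cases t with
      | nil => simp at hc
      | cons b u => simpa using hc
    rw [prodW_cons, map_mul]
    rw [show (ρ (PresentedGroup.of a) * ρ (prodW t)) m
        = ρ (PresentedGroup.of a) (ρ (prodW t) m) from rfl, ρ_of]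
    show fAct a (ρ (prodW t) m).1 = a :: t ++ m.1
    rw [ht]
    cases t with
    | nil =>
      cases hm : m.1 with
      | nil => simp [fAct, hm]
      | cons x u =>
        have hx : x ≠ a := by
          intro h
          exact hcond a (by simp) (by simp [hm, h])
        simp [fAct, hm, hx]
    | cons b u =>
      have hb : b ≠ a := (List.isChain_cons_cons.1 hl).1.symm
      simp [fAct, hb]

lemma step (i : Fin 3) (y : W3) (hy : prodW (ρ y e).1 = y) :
    prodW (ρ (PresentedGroup.of i * y) e).1 = PresentedGroup.of i * y := by
  rw [map_mul]
  rw [show (ρ (PresentedGroup.of i) * ρ y) e = ρ (PresentedGroup.of i) (ρ y e) from rfl, ρ_of]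
  show prodW (fAct i (ρ y e).1) = PresentedGroup.of i * y
  rcases h : (ρ y e).1 with _ | ⟨a, u⟩ <;> rw [h] at hy
  · simp [fAct, ← hy]
  · by_cases hai : a = i
    · subst hai
      have hf : fAct a (a :: u) = u := by simp [fAct]
      rw [hf, ← hy, prodW_cons, ← mul_assoc, of_sq, one_mul]
    · have hf : fAct i (a :: u) = i :: a :: u := by simp [fAct, hai]
      rw [hf, prodW_cons, hy]

lemma reduced_word (y : W3) : prodW (ρ y e).1 = y := by
  have hy : y ∈ Subgroup.closure (Set.range (PresentedGroup.of : Fin 3 → W3)) := by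
    rw [PresentedGroup.closure_range_of]; trivial
  refine Subgroup.closure_induction_left ?_ ?_ ?_ hy
  · simp [e]
  · rintro x ⟨i, rfl⟩ y _ hy
    exact step i y hy
  · rintro x ⟨i, rfl⟩ y _ hy
    have hinv : (PresentedGroup.of i : W3)⁻¹ = PresentedGroup.of i :=
      inv_eq_of_mul_eq_one_right (of_sq i)
    rw [hinv]
    exact step i y hy

lemma parity_prodW (l : List (Fin 3)) :
    parity (prodW l) = Multiplicative.ofAdd (l.length : ZMod 2) := by
  induction l with
  | nil => simp
  | cons a t ih =>
    rw [prodW_cons, map_mul, ih]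
    have hof : parity (PresentedGroup.of a) = Multiplicative.ofAdd (1 : ZMod 2) :=
      PresentedGroup.toGroup.of _
    rw [hof, ← ofAdd_add]
    congr 1
    rw [List.length_cons, Nat.cast_add, Nat.cast_one, add_comm]

lemma key : ∀ n (l : List (Fin 3)), l.length = n → l.Chain' (· ≠ ·) →
    prodW l * prodW l = 1 → Even l.length → l = [] := by
  intro n
  induction n using Nat.strong_induction_on with
  | _ n ih =>
    intro l hlen hl hsq heven
    rcases l with _ | ⟨a, t⟩
    · rfl
    rcases List.eq_nil_or_concat t with rfl | ⟨mid, c, rfl⟩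
    · simp at heven
    rw [List.concat_eq_append] at hl hsq heven hlen
    exfalso
    by_cases hac : a = c
    · -- cyclic reduction
      subst hac
      have hmid : mid.Chain' (· ≠ ·) :=
        ((List.isChain_cons.1 hl).2).prefix ⟨[a], rfl⟩
      have hz : PresentedGroup.of a * prodW (a :: (mid ++ [a])) * PresentedGroup.of a
          = prodW mid := by
        rw [prodW_cons, ← mul_assoc, of_sq, one_mul, prodW_append]
        simp only [prodW_cons, prodW_nil, mul_one]
        rw [mul_assoc, of_sq, mul_one]
      have hzsq : prodW mid * prodW mid = 1 := by
        rw [← hz]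
        calc (PresentedGroup.of a * prodW (a :: (mid ++ [a])) * PresentedGroup.of a) *
              (PresentedGroup.of a * prodW (a :: (mid ++ [a])) * PresentedGroup.of a)
            = PresentedGroup.of a *
                (prodW (a :: (mid ++ [a])) * (PresentedGroup.of a * PresentedGroup.of a) *
                 prodW (a :: (mid ++ [a]))) * PresentedGroup.of a := by group
          _ = PresentedGroup.of a *
                (prodW (a :: (mid ++ [a])) * prodW (a :: (mid ++ [a]))) *
                PresentedGroup.of a := by rw [of_sq, mul_one]
          _ = 1 := by rw [hsq, mul_one, of_sq]
      have hlen2 : (a :: (mid ++ [a])).length = mid.length + 2 := by simp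
      have hmidlen : mid.length < n := by omega
      have hmideven : Even mid.length := by
        rw [hlen2] at heven
        rcases heven with ⟨k, hk⟩
        exact ⟨k - 1, by omega⟩
      have hmidnil := ih mid.length hmidlen mid rfl hmid hzsq hmideven
      subst hmidnil
      simp [List.Chain'] at hl
    · -- no cancellation
      have hle : ρ (prodW (a :: (mid ++ [c]))) e = ⟨_, hl⟩ := by
        apply Subtype.ext
        have := noCancel _ hl e (by intro c' _; simp [e])
        simpa [e] using this
      have h2 : (ρ (prodW (a :: (mid ++ [c]))) ⟨_, hl⟩).1
          = (a :: (mid ++ [c])) ++ (a :: (mid ++ [c])) := by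
        apply noCancel _ hl
        intro c' hc'
        have hcc : c' = c := by
          rw [← List.cons_append, List.getLast?_concat] at hc'
          injection hc' with h
          exact h.symm
        subst hcc
        simp only [List.head?_cons, ne_eq, Option.some.injEq]
        exact fun h => hac h
      have h3 : ρ (prodW (a :: (mid ++ [c])))
          (ρ (prodW (a :: (mid ++ [c]))) e) = e := by
        rw [← Equiv.Perm.mul_apply, ← map_mul, hsq, map_one, Equiv.Perm.one_apply]
      rw [hle] at h3
      have h4 := congrArg Subtype.val h3
      rw [h2] at h4
      simp [e] at h4

lemma tors (y : W3) (hsq : y * y = 1) :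
    y = 1 ∨ parity y = Multiplicative.ofAdd (1 : ZMod 2) := by
  have hred := reduced_word y
  set l : List (Fin 3) := (ρ y e).1 with hldef
  by_cases heven : Even l.length
  · left
    have := key l.length l rfl (ρ y e).2 (by rw [hred]; exact hsq) heven
    rw [← hred, this, prodW_nil]
  · right
    rw [← hred, parity_prodW]
    congr 1
    have hodd : l.length % 2 = 1 := Nat.odd_iff.1 (Nat.not_even_iff_odd.1 heven)
    have : ((l.length : ℕ) : ZMod 2) = ((l.length % 2 : ℕ) : ZMod 2) :=
      (ZMod.natCast_mod _ _).symm
    rw [this, hodd, Nat.cast_one]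

lemma parity_of (i : Fin 3) :
    parity (PresentedGroup.of i : W3) = Multiplicative.ofAdd (1 : ZMod 2) :=
  PresentedGroup.toGroup.of _

lemma parity_comp (φ : MulAut W3) (y : W3) : parity (φ y) = parity y := by
  have hhom : parity.comp φ.toMonoidHom = parity := by
    apply PresentedGroup.ext
    intro x
    have hsq : φ (PresentedGroup.of x) * φ (PresentedGroup.of x) = 1 := by
      rw [← map_mul, of_sq, map_one]
    have hne : φ (PresentedGroup.of x) ≠ 1 := by
      intro h
      have h1 : (PresentedGroup.of x : W3) = 1 := by
        have := φ.injective (a₁ := PresentedGroup.of x) (a₂ := 1)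
        exact this (by rw [h, map_one])
      have := parity_of x
      rw [h1, map_one] at this
      exact absurd this.symm (by decide)
    rcases tors _ hsq with h | h
    · exact absurd h hne
    · simpa [parity_of] using h
  exact DFunLike.congr_fun hhom y

end W3Aux

open W3Aux in
theorem statement13 : ∀ φ : MulAut W3, E.map φ.toMonoidHom = E := by
  intro φ
  ext x
  simp only [Subgroup.mem_map, E, MonoidHom.mem_ker]
  constructor
  · rintro ⟨y, hy, rfl⟩
    rw [show (MulEquiv.toMonoidHom φ) y = φ y from rfl, parity_comp φ y]
    exact hy
  · intro hx
    refine ⟨φ.symm x, ?_, φ.apply_symm_apply x⟩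
    have := parity_comp φ (φ.symm x)
    rw [MulEquiv.apply_symm_apply] at this
    rw [← this]
    exact hx
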